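/- With $\mathrm K$ the MH transition operator on $L^2(\mu)$, $\mathrm K_{\mathrm{aug}}$ the transition operator on $L^2(\nu)$ of the augmented kernel $K_{\mathrm{aug}}((x,y),du\,dv) = \alpha(x,y)\delta_y(du)P(y,dv) + (1-\alpha(x,y))\delta_x(du)P(x,dv)$, $\mathrm H$ the swap-or-stay operator, and $\widehat{\mathrm P}$, $\widehat{\mathrm P}^*$ as above, one has the operator identities $\mathrm K = \widehat{\mathrm P}\, \mathrm H\, \widehat{\mathrm P}^*$ and $\mathrm K_{\mathrm{aug}} = \mathrm H\, \widehat{\mathrm P}^*\, \widehat{\mathrm P}$. -/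

import Mathlib

open MeasureTheory ProbabilityTheory ENNReal Filter

/-- The operator identities K = P̂ H P̂* and K_aug = H P̂* P̂. -/
theorem mh_operator_factorizations
    {G : Type*} [MeasurableSpace G]
    (μ₀ : Measure G) [SigmaFinite μ₀]
    (ρ : G → ℝ) (hρm : Measurable ρ) (hρ0 : ∀ x, 0 ≤ ρ x) (hρint : Integrable ρ μ₀)
    (Z : ℝ) (hZ : Z = ∫ x, ρ x ∂μ₀) (hZpos : 0 < Z)
    (μ : Measure G) [SFinite μ]
    (hμ : μ = μ₀.withDensity fun x => ENNReal.ofReal (ρ x / Z))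
    (P : Kernel G G) [IsMarkovKernel P]
    (p : G → G → ℝ) (hpm : Measurable (Function.uncurry p)) (hp0 : ∀ x y, 0 ≤ p x y)
    (hP : ∀ x, P x = μ₀.withDensity fun y => ENNReal.ofReal (p x y))
    (hpos : ∀ x y, 0 < ρ y → 0 < p x y)
    (bar : G → G → ℝ) (hbar : ∀ x y, bar x y = if 0 < ρ y then ρ y / p x y else 0)
    (r : G → G → ℝ)
    (hr : ∀ x y, r x y = if 0 < ρ x * p x y then ρ y * p y x / (ρ x * p x y) else 1)
    (α : G → G → ℝ) (hα : ∀ x y, α x y = min 1 (r x y))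
    (K : Kernel G G) [IsMarkovKernel K]
    (hK : ∀ x, K x = (P x).withDensity (fun y => ENNReal.ofReal (α x y)) +
      ENNReal.ofReal (∫ y, (1 - α x y) ∂(P x)) • Measure.dirac x)
    (Kaug : Kernel (G × G) (G × G)) [IsMarkovKernel Kaug]
    (hKaug : ∀ x y, Kaug (x, y) =
      ENNReal.ofReal (α x y) • ((Measure.dirac y).prod (P y)) +
      ENNReal.ofReal (1 - α x y) • ((Measure.dirac x).prod (P x)))
    : (∀ f : G → ℝ, Measurable f → (∀ x, Integrable f (P x)) →
        ∀ x, ∫ z, f z ∂(K x) =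
          ∫ y, (α x y * f y + (1 - α x y) * f x) ∂(P x)) ∧
      (∀ g : G × G → ℝ, Measurable g →
        (∀ x, Integrable (fun v => g (x, v)) (P x)) →
        ∀ x y, ∫ q, g q ∂(Kaug (x, y)) =
          α x y * (∫ v, g (y, v) ∂(P y)) + (1 - α x y) * (∫ v, g (x, v) ∂(P x))) := by
  -- basic facts about α
  have hpx : ∀ x, Measurable (fun y => p x y) := fun x => hpm.comp measurable_prodMk_left
  have hpy : ∀ x, Measurable (fun y => p y x) :=
    fun x => hpm.comp (measurable_id.prodMk measurable_const)
  have hrm : ∀ x, Measurable (fun y => r x y) := by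
    intro x
    have h : (fun y => r x y)
        = fun y => if 0 < ρ x * p x y then ρ y * p y x / (ρ x * p x y) else 1 :=
      funext fun y => hr x y
    rw [h]
    exact Measurable.ite (measurableSet_lt measurable_const (measurable_const.mul (hpx x)))
      ((hρm.mul (hpy x)).div (measurable_const.mul (hpx x))) measurable_const
  have hαm : ∀ x, Measurable (fun y => α x y) := by
    intro x
    have h : (fun y => α x y) = fun y => min 1 (r x y) := funext fun y => hα x y
    rw [h]; exact measurable_const.min (hrm x)
  have hr0 : ∀ x y, 0 ≤ r x y := by
    intro x y; rw [hr]
    split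
    · exact div_nonneg (mul_nonneg (hρ0 y) (hp0 y x)) (by positivity)
    · norm_num
  have hα0 : ∀ x y, 0 ≤ α x y := fun x y => by
    rw [hα]; exact le_min zero_le_one (hr0 x y)
  have hα1 : ∀ x y, α x y ≤ 1 := fun x y => by rw [hα]; exact min_le_left _ _
  constructor
  · -- first identity
    intro f hf hfint x
    have hd : Measurable (fun y => (α x y).toNNReal) := (hαm x).real_toNNReal
    have hwd : ((P x).withDensity fun y => ENNReal.ofReal (α x y)) =
        (P x).withDensity fun y => ((α x y).toNNReal : ℝ≥0∞) := rfl
    -- integrability pieces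
    have hαf : Integrable (fun y => α x y * f y) (P x) :=
      (hfint x).bdd_mul (c := 1) ((hαm x).aestronglyMeasurable)
        (Filter.Eventually.of_forall fun y => by rw [Real.norm_eq_abs, abs_of_nonneg (hα0 x y)]; exact hα1 x y)
    have hint1 : Integrable f ((P x).withDensity fun y => ((α x y).toNNReal : ℝ≥0∞)) := by
      rw [integrable_withDensity_iff_integrable_smul hd]
      have : (fun y => (α x y).toNNReal • f y) = fun y => α x y * f y := by
        funext y
        rw [NNReal.smul_def, Real.coe_toNNReal _ (hα0 x y), smul_eq_mul]
      rwa [this]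
    have hdirac : Integrable f (Measure.dirac x) := by
      refine ⟨hf.aestronglyMeasurable, ?_⟩
      simp [HasFiniteIntegral, lintegral_dirac' _ (hf.enorm)]
    have hint2 : Integrable f
        ((ENNReal.ofReal (∫ y, (1 - α x y) ∂(P x))) • Measure.dirac x) :=
      hdirac.smul_measure ENNReal.ofReal_ne_top
    have hiα : Integrable (fun y => α x y) (P x) :=
      (integrable_const (1 : ℝ)).mono' ((hαm x).aestronglyMeasurable)
        (Filter.Eventually.of_forall fun y => by
          rw [Real.norm_eq_abs, abs_of_nonneg (hα0 x y)]; exact hα1 x y)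
    have hi1α : Integrable (fun y => 1 - α x y) (P x) := (integrable_const 1).sub hiα
    have hi1αf : Integrable (fun y => (1 - α x y) * f x) (P x) := hi1α.mul_const _
    rw [hK x, hwd, integral_add_measure hint1 hint2, integral_smul_measure,
      integral_withDensity_eq_integral_smul hd,
      integral_dirac' f x hf.stronglyMeasurable,
      ENNReal.toReal_ofReal (integral_nonneg fun y => sub_nonneg.mpr (hα1 x y)),
      integral_add hαf hi1αf, integral_mul_const]
    congr 1
    refine integral_congr_ae (Filter.Eventually.of_forall fun y => ?_)
    simp only [NNReal.smul_def, Real.coe_toNNReal _ (hα0 x y), smul_eq_mul]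
  · -- second identity
    intro g hg hgint x y
    have hmap : ∀ z : G, Integrable g ((P z).map (Prod.mk z)) := fun z =>
      (integrable_map_measure hg.aestronglyMeasurable
        measurable_prodMk_left.aemeasurable).mpr (hgint z)
    have hImap : ∀ z : G, ∫ q, g q ∂((P z).map (Prod.mk z)) = ∫ v, g (z, v) ∂(P z) :=
      fun z => integral_map measurable_prodMk_left.aemeasurable hg.aestronglyMeasurable
    rw [hKaug x y, Measure.dirac_prod, Measure.dirac_prod,
      integral_add_measure ((hmap y).smul_measure ENNReal.ofReal_ne_top)
        ((hmap x).smul_measure ENNReal.ofReal_ne_top),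
      integral_smul_measure, integral_smul_measure,
      ENNReal.toReal_ofReal (hα0 x y),
      ENNReal.toReal_ofReal (sub_nonneg.mpr (hα1 x y)),
      hImap x, hImap y, smul_eq_mul, smul_eq_mul]
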